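/- The halting problem is not weakly intrinsically generic-case computable: there exists a computable permutation π : ℕ → ℕ such that π(K) is not generic-case computable, where K = {e ∈ ℕ : φ_e(e) converges} is the halting set. -/

import Mathlib

open Filter

open scoped Classical

/-- The `n`-th partial density of `S ⊆ ℕ`: `|S ∩ [0,n)| / n`. -/
noncomputable def partialDensity (S : Set ℕ) (n : ℕ) : ℝ :=
  (((Finset.range n).filter (fun m => m ∈ S)).card : ℝ) / n

/-- `S` has asymptotic density `d`. -/
def HasDensity (S : Set ℕ) (d : ℝ) : Prop :=
  Tendsto (partialDensity S) atTop (nhds d)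

/-- The upper asymptotic density of `S`. -/
noncomputable def upperDensity (S : Set ℕ) : ℝ :=
  limsup (partialDensity S) atTop

/-- The lower asymptotic density of `S`. -/
noncomputable def lowerDensity (S : Set ℕ) : ℝ :=
  liminf (partialDensity S) atTop

/-- A computable permutation of `ℕ`. -/
def ComputablePerm (π : ℕ → ℕ) : Prop :=
  Function.Bijective π ∧ Computable π

/-- `A` is computably enumerable: the domain of a partial computable function. -/
def CE (A : Set ℕ) : Prop :=
  ∃ f : ℕ →. ℕ, Partrec f ∧ ∀ n, n ∈ A ↔ (f n).Dom

/-- The principal function of `S`: `p_S n` is the least `x` with `|S ∩ [0,x)| ≥ n`. -/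
noncomputable def principalFn (S : Set ℕ) (n : ℕ) : ℕ :=
  sInf {x | n ≤ ((Finset.range x).filter (fun m => m ∈ S)).card}

/-- The `e`-th partial computable function, via the standard numbering of codes. -/
def phi (e : ℕ) : ℕ →. ℕ := (Denumerable.ofNat Nat.Partrec.Code e).eval

/-- The halting set `K = {e : φ_e(e)↓}`. -/
def haltingSet : Set ℕ := {e | (phi e e).Dom}

/-- `f` is a partial description of `A`: wherever `f` converges, it agrees with
the characteristic function of `A`. -/
def PartialDescription (f : ℕ →. Bool) (A : Set ℕ) : Prop :=
  ∀ n b, b ∈ f n → (b = true ↔ n ∈ A)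

/-- `A` is generic-case computable: it has a partial computable partial
description whose domain has density 1. -/
def GenericCaseComputable (A : Set ℕ) : Prop :=
  ∃ f : ℕ →. Bool, Partrec f ∧ PartialDescription f A ∧
    HasDensity {n | (f n).Dom} 1

namespace HNW

open Nat.Partrec (Code)
open Nat.Partrec.Code
open Encodable (encode)

/-! ### The diagonal function, via an explicit recursion-theorem trick -/

/-- The underlying diagonal partial function.  On input `v = ⟨m, x⟩` with
`m = ⟨c', ⟨e, j⟩⟩`, it (ignoring `x`) runs `φ_e` on `encode (curry (ofNat c') m)`
and maps the result to `0`. -/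
def chi : ℕ →. ℕ := fun v =>
  (phi v.unpair.1.unpair.2.unpair.1
      (encode ((Denumerable.ofNat Code v.unpair.1.unpair.1).curry v.unpair.1))).map
    fun _ => 0

theorem chi_partrec : Partrec chi := by
  have u1 : Primrec (fun v : ℕ => v.unpair.1) := Primrec.fst.comp Primrec.unpair
  have u2 : Primrec (fun v : ℕ => v.unpair.2) := Primrec.snd.comp Primrec.unpair
  have hev : Primrec (fun v : ℕ => v.unpair.1.unpair.2.unpair.1) :=
    u1.comp (u2.comp u1)
  have htv : Primrec (fun v : ℕ =>
      encode ((Denumerable.ofNat Code v.unpair.1.unpair.1).curry v.unpair.1)) :=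
    Primrec.encode.comp
      (primrec₂_curry.comp ((Primrec.ofNat Code).comp (u1.comp u1)) u1)
  have heval : Partrec (fun v : ℕ =>
      phi v.unpair.1.unpair.2.unpair.1
        (encode ((Denumerable.ofNat Code v.unpair.1.unpair.1).curry v.unpair.1))) :=
    eval_part.comp ((Primrec.ofNat Code).comp hev).to_comp htv.to_comp
  exact heval.map ((Computable.const 0).comp Computable.fst).to₂

/-- A code for `chi`. -/
noncomputable def cchi : Code :=
  Classical.choose (exists_code.1 (Partrec.nat_iff.1 chi_partrec))

theorem eval_cchi : eval cchi = chi :=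
  Classical.choose_spec (exists_code.1 (Partrec.nat_iff.1 chi_partrec))

/-- The diagonal function: `dg e j` is (the index of) a program that halts on any
input iff `φ_e` halts on `dg e j` itself. -/
noncomputable def dg (e j : ℕ) : ℕ :=
  encode (cchi.curry (Nat.pair (encode cchi) (Nat.pair e j)))

theorem phi_dg (e j x : ℕ) : phi (dg e j) x = (phi e (dg e j)).map fun _ => 0 := by
  show eval (Denumerable.ofNat Code (dg e j)) x = _
  rw [dg, Denumerable.ofNat_encode, eval_curry, eval_cchi]
  simp [chi, Nat.unpair_pair, Denumerable.ofNat_encode, dg]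

theorem dg_mem_halting (e j : ℕ) : dg e j ∈ haltingSet ↔ (phi e (dg e j)).Dom := by
  show (phi (dg e j) (dg e j)).Dom ↔ _
  rw [phi_dg]
  exact Part.dom_iff_mem.trans (by simp [Part.mem_map_iff, ← Part.dom_iff_mem])

theorem dg_inj (e : ℕ) : Function.Injective (dg e) := by
  intro j k h
  have h2 := (curry_inj (Encodable.encode_injective h)).2
  have h3 := congrArg (fun n => n.unpair.2.unpair.2) h2
  simpa [Nat.unpair_pair] using h3

theorem dg_good {e : ℕ} (hW : ∀ n, (phi e n).Dom → n ∉ haltingSet) (j : ℕ) :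
    dg e j ∉ haltingSet ∧ ¬(phi e (dg e j)).Dom := by
  by_cases h : (phi e (dg e j)).Dom
  · exact absurd ((dg_mem_halting e j).2 h) (hW _ h)
  · exact ⟨fun hk => h ((dg_mem_halting e j).1 hk), h⟩

/-! ### Searching helpers -/

/-- `nmem l n = true` iff `n ∉ l`. -/
def nmem (l : List ℕ) (n : ℕ) : Bool := l.idxOf n == l.length

theorem nmem_iff {l : List ℕ} {n : ℕ} : nmem l n = true ↔ n ∉ l := by
  simp [nmem, List.idxOf_eq_length_iff]

theorem findIdx_range_spec {p : ℕ → Bool} {L : ℕ} (h : ∃ n, n < L ∧ p n = true) :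
    p ((List.range L).findIdx p) = true ∧ (List.range L).findIdx p < L ∧
      ∀ m < (List.range L).findIdx p, p m = false := by
  obtain ⟨n, hn, hp⟩ := h
  have hex : ∃ x ∈ List.range L, p x := ⟨n, List.mem_range.2 hn, hp⟩
  have hlt := List.findIdx_lt_length_of_exists hex
  rw [List.length_range] at hlt
  refine ⟨?_, hlt, ?_⟩
  · have := List.findIdx_getElem (p := p) (xs := List.range L) (w := by simpa using hlt)
    simpa [List.get_eq_getElem, List.getElem_range] using this
  · intro m hm
    have hm' : m < (List.range L).length := by simp; omega
    have := List.not_of_lt_findIdx (xs := List.range L) (i := m) hm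
    simpa [List.getElem_range] using this

theorem exists_lt_notMem (l : List ℕ) (g : ℕ → ℕ) (hg : Function.Injective g) :
    ∃ j, j < l.length + 1 ∧ g j ∉ l := by
  by_contra h
  push_neg at h
  have hsub : (Finset.range (l.length + 1)).image g ⊆ l.toFinset := by
    intro x hx
    obtain ⟨j, hj, rfl⟩ := Finset.mem_image.1 hx
    exact List.mem_toFinset.2 (h j (Finset.mem_range.1 hj))
  have h1 : l.length + 1 ≤ l.toFinset.card := by
    have := Finset.card_le_card hsub
    rwa [Finset.card_image_of_injective _ hg, Finset.card_range] at this
  have h2 := List.toFinset_card_le l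
  omega

/-- The least natural number not in `l`. -/
def lu (l : List ℕ) : ℕ := (List.range (l.length + 1)).findIdx (fun n => nmem l n)

theorem lu_spec (l : List ℕ) : lu l ∉ l ∧ ∀ m < lu l, m ∈ l := by
  obtain ⟨j, hj, hnj⟩ := exists_lt_notMem l id Function.injective_id
  have h := findIdx_range_spec (p := fun n => nmem l n) (L := l.length + 1)
    ⟨j, hj, nmem_iff.2 hnj⟩
  exact ⟨nmem_iff.1 h.1, fun m hm => by
    by_contra hml
    exact absurd (h.2.2 m hm) (by simp [nmem_iff.2 hml])⟩

/-- The least `j` such that `dg e j ∉ l`. -/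
noncomputable def jp (e : ℕ) (l : List ℕ) : ℕ :=
  (List.range (l.length + 1)).findIdx (fun j => nmem l (dg e j))

theorem jp_spec (e : ℕ) (l : List ℕ) : dg e (jp e l) ∉ l := by
  obtain ⟨j, hj, hnj⟩ := exists_lt_notMem l (dg e) (dg_inj e)
  have h := findIdx_range_spec (p := fun j => nmem l (dg e j)) (L := l.length + 1)
    ⟨j, hj, nmem_iff.2 hnj⟩
  exact nmem_iff.1 h.1

/-! ### The state machine building the permutation -/

/-- The value assigned at block `s`, offset `o`, with list of used values `l`. -/
noncomputable def pick (s o : ℕ) (l : List ℕ) : ℕ :=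
  if o % 2 = 1 then dg s.unpair.1 (jp s.unpair.1 l) else lu l

theorem pick_not_mem (s o : ℕ) (l : List ℕ) : pick s o l ∉ l := by
  unfold pick; split
  · exact jp_spec _ _
  · exact (lu_spec l).1

/-- One step of the machine. -/
noncomputable def stepf : ℕ × ℕ × List ℕ → ℕ × ℕ × List ℕ := fun q =>
  if q.2.1 + 1 = 2 ^ q.1 then (q.1 + 1, 0, pick q.1 q.2.1 q.2.2 :: q.2.2)
  else (q.1, q.2.1 + 1, pick q.1 q.2.1 q.2.2 :: q.2.2)

/-- The machine state after `x` steps. -/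
noncomputable def states (x : ℕ) : ℕ × ℕ × List ℕ := stepf^[x] (0, 0, [])

/-- The inverse permutation: the value assigned to position `x`. -/
noncomputable def sig (x : ℕ) : ℕ := (states (x + 1)).2.2.headI

theorem states_zero : states 0 = (0, 0, []) := rfl

theorem states_succ (x : ℕ) : states (x + 1) = stepf (states x) :=
  Function.iterate_succ_apply' _ _ _

theorem sig_eq (x : ℕ) : sig x = pick (states x).1 (states x).2.1 (states x).2.2 := by
  unfold sig; rw [states_succ]; unfold stepf; split <;> rfl

theorem states_list_succ (x : ℕ) :
    (states (x + 1)).2.2 = sig x :: (states x).2.2 := by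
  rw [sig_eq, states_succ]; unfold stepf; split <;> rfl

theorem sig_not_mem (x : ℕ) : sig x ∉ (states x).2.2 := by
  rw [sig_eq]; exact pick_not_mem _ _ _

theorem states_suffix {x y : ℕ} (h : x ≤ y) :
    (states x).2.2 <:+ (states y).2.2 := by
  induction y with
  | zero => simpa [Nat.le_zero.1 h] using List.suffix_refl _
  | succ y ih =>
    rcases Nat.lt_or_ge x (y + 1) with h' | h'
    · exact (ih (Nat.lt_succ_iff.1 h')).trans
        (by rw [states_list_succ]; exact List.suffix_cons _ _)
    · have : x = y + 1 := le_antisymm h h'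
      subst this; exact List.suffix_refl _

theorem mem_states {x v : ℕ} (h : v ∈ (states x).2.2) : ∃ y, y < x ∧ sig y = v := by
  induction x with
  | zero => simp [states_zero] at h
  | succ x ih =>
    rw [states_list_succ] at h
    rcases List.mem_cons.1 h with h | h
    · exact ⟨x, Nat.lt_succ_self x, h.symm⟩
    · obtain ⟨y, hy, hv⟩ := ih h
      exact ⟨y, Nat.lt_succ_of_lt hy, hv⟩

theorem sig_mem (x : ℕ) : sig x ∈ (states (x + 1)).2.2 := by
  rw [states_list_succ]; exact List.mem_cons_self

theorem sig_injective : Function.Injective sig := by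
  have key : ∀ x y, x < y → sig x ≠ sig y := by
    intro x y hxy h
    have h1 : sig x ∈ (states y).2.2 :=
      (states_suffix (Nat.succ_le_of_lt hxy)).subset (sig_mem x)
    rw [h] at h1
    exact sig_not_mem y h1
  intro x y h
  rcases lt_trichotomy x y with h' | h' | h'
  · exact absurd h (key x y h')
  · exact h'
  · exact absurd h.symm (key y x h')

/-! ### Block structure -/

theorem states_inv (x : ℕ) :
    2 ^ (states x).1 - 1 + (states x).2.1 = x ∧ (states x).2.1 < 2 ^ (states x).1 := by
  induction x with
  | zero => simp [states_zero]
  | succ x ih =>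
    obtain ⟨h1, h2⟩ := ih
    rw [states_succ]
    unfold stepf
    split
    next hc =>
      have hp : (2:ℕ) ^ ((states x).1 + 1) = 2 * 2 ^ (states x).1 := by ring
      have h1p : (1:ℕ) ≤ 2 ^ (states x).1 := Nat.one_le_two_pow
      constructor <;> simp only [] <;> omega
    next hc =>
      constructor <;> simp only [] <;> omega

theorem decomp_unique {s t s' t' : ℕ} (h : 2 ^ s - 1 + t = 2 ^ s' - 1 + t')
    (ht : t < 2 ^ s) (ht' : t' < 2 ^ s') : s = s' ∧ t = t' := by
  have key : ∀ a b : ℕ, a < b → 2 ^ (a + 1) ≤ 2 ^ b :=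
    fun a b hab => Nat.pow_le_pow_right (by norm_num) hab
  rcases lt_trichotomy s s' with h' | h' | h'
  · have := key s s' h'
    have hp : (2:ℕ) ^ (s + 1) = 2 * 2 ^ s := by ring
    have h1 : (1:ℕ) ≤ 2 ^ s := Nat.one_le_two_pow
    have h1' : (1:ℕ) ≤ 2 ^ s' := Nat.one_le_two_pow
    omega
  · exact ⟨h', by have h1 : (1:ℕ) ≤ 2 ^ s := Nat.one_le_two_pow; subst h'; omega⟩
  · have := key s' s h'
    have hp : (2:ℕ) ^ (s' + 1) = 2 * 2 ^ s' := by ring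
    have h1 : (1:ℕ) ≤ 2 ^ s := Nat.one_le_two_pow
    have h1' : (1:ℕ) ≤ 2 ^ s' := Nat.one_le_two_pow
    omega

theorem states_spec {s t : ℕ} (ht : t < 2 ^ s) :
    (states (2 ^ s - 1 + t)).1 = s ∧ (states (2 ^ s - 1 + t)).2.1 = t := by
  set x := 2 ^ s - 1 + t with hx
  obtain ⟨h1, h2⟩ := states_inv x
  obtain ⟨hs, hts⟩ := decomp_unique (h1.trans hx) h2 ht
  exact ⟨hs, hts⟩

theorem sig_diag {s t : ℕ} (ht : t < 2 ^ s) (hodd : t % 2 = 1) :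
    ∃ j, sig (2 ^ s - 1 + t) = dg s.unpair.1 j := by
  obtain ⟨h1, h2⟩ := states_spec ht
  rw [sig_eq, h1, h2]
  unfold pick
  rw [if_pos hodd]
  exact ⟨_, rfl⟩

theorem sig_filler (s : ℕ) : sig (2 ^ s - 1) = lu (states (2 ^ s - 1)).2.2 := by
  have h0 : (0:ℕ) < 2 ^ s := Nat.pow_pos (by norm_num)
  obtain ⟨h1, h2⟩ := states_spec (s := s) (t := 0) h0
  rw [show 2 ^ s - 1 + 0 = 2 ^ s - 1 from rfl] at h1 h2
  rw [sig_eq, h1, h2]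
  unfold pick
  rw [if_neg (by norm_num)]

theorem sig_surjective : Function.Surjective sig := by
  intro n
  by_contra h
  push_neg at h
  have hn : ∀ x, n ∉ (states x).2.2 := by
    intro x hmem
    obtain ⟨y, _, hy⟩ := mem_states hmem
    exact h y hy
  have key : ∀ s : ℕ, sig (2 ^ s - 1) ≤ n := by
    intro s
    rw [sig_filler]
    by_contra hlt
    exact hn _ ((lu_spec ((states (2 ^ s - 1)).2.2)).2 n (lt_of_not_ge hlt))
  have hinj : Function.Injective (fun s : ℕ => sig (2 ^ s - 1)) := by
    intro a b hab
    have h2 := sig_injective hab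
    have ha : (1:ℕ) ≤ 2 ^ a := Nat.one_le_two_pow
    have hb : (1:ℕ) ≤ 2 ^ b := Nat.one_le_two_pow
    have h3 : (2:ℕ) ^ a = 2 ^ b := by omega
    exact Nat.pow_right_injective (le_refl 2) h3
  have hsub : (Finset.range (n + 2)).image (fun s : ℕ => sig (2 ^ s - 1))
      ⊆ Finset.range (n + 1) := by
    intro x hx
    obtain ⟨s, _, rfl⟩ := Finset.mem_image.1 hx
    exact Finset.mem_range.2 (Nat.lt_succ_of_le (key s))
  have := Finset.card_le_card hsub
  rw [Finset.card_image_of_injective _ hinj, Finset.card_range, Finset.card_range] at this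
  omega

/-- The permutation: the position at which value `n` is placed. -/
noncomputable def pif (n : ℕ) : ℕ := Nat.find (sig_surjective n)

theorem sig_pif (n : ℕ) : sig (pif n) = n := Nat.find_spec (sig_surjective n)

theorem pif_sig (x : ℕ) : pif (sig x) = x := sig_injective (sig_pif (sig x))

theorem pif_bijective : Function.Bijective pif :=
  ⟨fun a b hab => by rw [← sig_pif a, ← sig_pif b, hab],
   fun x => ⟨sig x, pif_sig x⟩⟩

/-! ### Computability -/

theorem dg_primrec : Primrec₂ dg := by
  have : Primrec (fun p : ℕ × ℕ =>
      encode (cchi.curry (Nat.pair (encode cchi) (Nat.pair p.1 p.2)))) :=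
    Primrec.encode.comp (primrec₂_curry.comp (Primrec.const cchi)
      (Primrec₂.natPair.comp (Primrec.const (encode cchi))
        (Primrec₂.natPair.comp Primrec.fst Primrec.snd)))
  exact this

theorem nmem_primrec : Primrec₂ nmem :=
  Primrec.beq.comp (Primrec.list_idxOf.comp Primrec.snd Primrec.fst)
    (Primrec.list_length.comp Primrec.fst)

theorem lu_primrec : Primrec lu :=
  Primrec.list_findIdx
    (Primrec.list_range.comp (Primrec.succ.comp Primrec.list_length)) nmem_primrec

theorem jp_primrec : Primrec₂ jp := by
  have : Primrec (fun a : ℕ × List ℕ =>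
      (List.range (a.2.length + 1)).findIdx (fun j => nmem a.2 (dg a.1 j))) :=
    Primrec.list_findIdx
      (Primrec.list_range.comp (Primrec.succ.comp (Primrec.list_length.comp Primrec.snd)))
      (nmem_primrec.comp (Primrec.snd.comp Primrec.fst)
        (dg_primrec.comp (Primrec.fst.comp Primrec.fst) Primrec.snd))
  exact this

theorem two_pow_primrec : Primrec (fun s : ℕ => 2 ^ s) := by
  have h : Primrec (fun s : ℕ => (fun x : ℕ => 2 * x)^[s] 1) :=
    Primrec.nat_iterate Primrec.id (Primrec.const 1)
      ((Primrec.nat_mul.comp (Primrec.const 2) Primrec.snd).to₂)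
  exact h.of_eq (fun s => by
    induction s with
    | zero => simp
    | succ s ih => rw [Function.iterate_succ_apply', ih, pow_succ]; ring)

theorem stepf_primrec : Primrec stepf := by
  have hs : Primrec (fun q : ℕ × ℕ × List ℕ => q.1) := Primrec.fst
  have ho : Primrec (fun q : ℕ × ℕ × List ℕ => q.2.1) := Primrec.fst.comp Primrec.snd
  have hl : Primrec (fun q : ℕ × ℕ × List ℕ => q.2.2) := Primrec.snd.comp Primrec.snd
  have hu1 : Primrec (fun q : ℕ × ℕ × List ℕ => q.1.unpair.1) :=
    Primrec.fst.comp (Primrec.unpair.comp hs)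
  have hpick : Primrec (fun q : ℕ × ℕ × List ℕ => pick q.1 q.2.1 q.2.2) := by
    have hcond : PrimrecPred (fun q : ℕ × ℕ × List ℕ => q.2.1 % 2 = 1) :=
      Primrec.eq.comp (Primrec.nat_mod.comp ho (Primrec.const 2)) (Primrec.const 1)
    exact Primrec.ite hcond
      (dg_primrec.comp hu1 (jp_primrec.comp hu1 hl)) (lu_primrec.comp hl)
  have hcond2 : PrimrecPred (fun q : ℕ × ℕ × List ℕ => q.2.1 + 1 = 2 ^ q.1) :=
    Primrec.eq.comp (Primrec.succ.comp ho) (two_pow_primrec.comp hs)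
  have hl' : Primrec (fun q : ℕ × ℕ × List ℕ => pick q.1 q.2.1 q.2.2 :: q.2.2) :=
    Primrec.list_cons.comp hpick hl
  exact Primrec.ite hcond2
    ((Primrec.succ.comp hs).pair ((Primrec.const 0).pair hl'))
    (hs.pair ((Primrec.succ.comp ho).pair hl'))

theorem states_primrec : Primrec states := by
  have : Primrec (fun x : ℕ => stepf^[x] ((0, 0, []) : ℕ × ℕ × List ℕ)) :=
    Primrec.nat_iterate Primrec.id (Primrec.const (0, 0, []))
      ((stepf_primrec.comp Primrec.snd).to₂)
  exact this

theorem sig_primrec : Primrec sig :=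
  Primrec.list_headI.comp
    (Primrec.snd.comp (Primrec.snd.comp (states_primrec.comp Primrec.succ)))

theorem sig_computable : Computable sig := sig_primrec.to_comp

theorem pif_computable : Computable pif := by
  have hc : Computable₂ (fun n x : ℕ => sig x == n) :=
    (Primrec.beq.comp (sig_primrec.comp Primrec.snd) Primrec.fst).to_comp
  have hp : Partrec₂ (fun n x : ℕ => (Part.some (sig x == n) : Part Bool)) :=
    hc.partrec₂
  have hrf := Partrec.rfind hp
  refine hrf.of_eq (fun n => ?_)
  apply Part.eq_some_iff.2
  apply Nat.mem_rfind.2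
  constructor
  · simp [Part.mem_some_iff, sig_pif]
  · intro m hm
    have := Nat.find_min (sig_surjective n) hm
    simp [Part.mem_some_iff]
    exact this

end HNW

theorem halting_not_weakly_intrinsically_gc :
    ∃ π : ℕ → ℕ, ComputablePerm π ∧
      ¬GenericCaseComputable (π '' haltingSet) := by
  refine ⟨HNW.pif, ⟨HNW.pif_bijective, HNW.pif_computable⟩, ?_⟩
  rintro ⟨f, hf, hdesc, hdens⟩
  -- The set of positions where `f` outputs `false`, pulled back through the
  -- permutation, is a c.e. subset of the complement of the halting set.
  set F : ℕ →. ℕ :=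
    fun n => (f (HNW.pif n)).bind fun b => bif b then Part.none else Part.some 0 with hFdef
  have hg : Partrec₂ (fun (_ : ℕ) (b : Bool) =>
      bif b then Part.none else (Part.some 0 : Part ℕ)) := by
    have h0 : Partrec (fun _ : ℕ × Bool => (Part.some 0 : Part ℕ)) :=
      ((Computable.const (0 : ℕ)).partrec (α := ℕ × Bool))
    have : Partrec (fun p : ℕ × Bool =>
        bif p.2 then Part.none else (Part.some 0 : Part ℕ)) :=
      Partrec.cond Computable.snd Partrec.none h0
    exact this
  have hFpr : Partrec F := (hf.comp HNW.pif_computable).bind hg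
  obtain ⟨c, hc⟩ := Nat.Partrec.Code.exists_code.1 (Partrec.nat_iff.1 hFpr)
  set e₀ := Encodable.encode c with he₀
  have hphi : phi e₀ = F := by rw [phi, he₀, Denumerable.ofNat_encode, hc]
  have hWdom : ∀ n, (phi e₀ n).Dom ↔ false ∈ f (HNW.pif n) := by
    intro n
    rw [hphi]
    constructor
    · intro h
      obtain ⟨a, ha⟩ := Part.dom_iff_mem.1 h
      obtain ⟨b, hb, hgb⟩ := Part.mem_bind_iff.1 ha
      cases b
      · exact hb
      · simp at hgb
    · intro h
      exact Part.dom_iff_mem.2 ⟨0, Part.mem_bind_iff.2 ⟨false, h, by simp⟩⟩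
  have hWK : ∀ n, (phi e₀ n).Dom → n ∉ haltingSet := by
    intro n h hK
    have hfal := (hWdom n).1 h
    have h2 := hdesc _ false hfal
    have hmem : HNW.pif n ∈ HNW.pif '' haltingSet := ⟨n, hK, rfl⟩
    simpa using h2.2 hmem
  -- On the odd offsets of blocks dedicated to `e₀`, `f` must diverge.
  have hdiag : ∀ s t : ℕ, s.unpair.1 = e₀ → t < 2 ^ s → t % 2 = 1 →
      ¬ (f (2 ^ s - 1 + t)).Dom := by
    intro s t hse ht hodd hdom
    obtain ⟨j, hj⟩ := HNW.sig_diag ht hodd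
    rw [hse] at hj
    obtain ⟨hgood1, hgood2⟩ := HNW.dg_good hWK j
    set x := 2 ^ s - 1 + t with hxdef
    have hb : (f x).get hdom ∈ f x := Part.get_mem hdom
    cases hbv : (f x).get hdom
    · rw [hbv] at hb
      have hmem : false ∈ f (HNW.pif (HNW.sig x)) := by rw [HNW.pif_sig]; exact hb
      have hd := (hWdom _).2 hmem
      rw [hj] at hd
      exact hgood2 hd
    · rw [hbv] at hb
      have hx : x ∈ HNW.pif '' haltingSet := (hdesc x true hb).1 rfl
      obtain ⟨m, hm, hpm⟩ := hx
      have hms : m = HNW.sig x := by rw [← hpm, HNW.sig_pif]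
      rw [hms, hj] at hm
      exact hgood1 hm
  -- Density estimate along the ends of blocks dedicated to `e₀`.
  set D := {n | (f n).Dom} with hD
  set Ns : ℕ → ℕ := fun k => 2 ^ (Nat.pair e₀ (k + 1) + 1) - 1 with hNs
  have hbound : ∀ k, partialDensity D (Ns k) ≤ 3 / 4 := by
    intro k
    set s := Nat.pair e₀ (k + 1) with hs
    have hs1 : 1 ≤ s := le_trans (Nat.succ_le_succ (Nat.zero_le k)) (Nat.right_le_pair e₀ (k + 1))
    have hsplit : 2 ^ s = 2 * 2 ^ (s - 1) := by
      conv_lhs => rw [show s = (s - 1) + 1 by omega]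
      ring
    have h2s1 : (2 : ℕ) ^ (s + 1) = 2 * 2 ^ s := by ring
    have h1pow : (1 : ℕ) ≤ 2 ^ s := Nat.one_le_two_pow
    set N := 2 ^ (s + 1) - 1 with hN
    have hNs_eq : Ns k = N := rfl
    set T := (Finset.range (2 ^ (s - 1))).image (fun u => 2 ^ s - 1 + (2 * u + 1)) with hT
    have hTcard : T.card = 2 ^ (s - 1) := by
      rw [hT, Finset.card_image_of_injective _ (fun a b h => by omega), Finset.card_range]
    have hTsub : T ⊆ Finset.range N := by
      intro x hx
      obtain ⟨u, hu, rfl⟩ := Finset.mem_image.1 hx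
      rw [Finset.mem_range] at hu ⊢
      omega
    have hTD : ∀ x ∈ T, x ∉ D := by
      intro x hx
      obtain ⟨u, hu, rfl⟩ := Finset.mem_image.1 hx
      rw [Finset.mem_range] at hu
      have hnd := hdiag s (2 * u + 1) (by rw [hs, Nat.unpair_pair]) (by omega) (by omega)
      simpa [hD] using hnd
    have hsub2 : (Finset.range N).filter (fun m => m ∈ D) ⊆ Finset.range N \ T := by
      intro x hx
      rw [Finset.mem_filter] at hx
      rw [Finset.mem_sdiff]
      exact ⟨hx.1, fun hxT => hTD x hxT hx.2⟩
    have hcard : ((Finset.range N).filter (fun m => m ∈ D)).card ≤ N - 2 ^ (s - 1) := by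
      calc ((Finset.range N).filter (fun m => m ∈ D)).card
          ≤ (Finset.range N \ T).card := Finset.card_le_card hsub2
        _ = N - 2 ^ (s - 1) := by rw [Finset.card_sdiff_of_subset hTsub, Finset.card_range, hTcard]
    have hNpos : 0 < N := by omega
    rw [hNs_eq]
    unfold partialDensity
    rw [div_le_iff₀ (by exact_mod_cast hNpos)]
    have h2N : (2 : ℕ) ^ (s - 1) ≤ N := by omega
    have hcast : (((Finset.range N).filter (fun m => m ∈ D)).card : ℝ)
        ≤ (N : ℝ) - ((2 ^ (s - 1) : ℕ) : ℝ) := by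
      calc (((Finset.range N).filter (fun m => m ∈ D)).card : ℝ)
          ≤ ((N - 2 ^ (s - 1) : ℕ) : ℝ) := Nat.cast_le.2 hcard
        _ = (N : ℝ) - ((2 ^ (s - 1) : ℕ) : ℝ) := by rw [Nat.cast_sub h2N]
    have h4 : (N : ℝ) ≤ 4 * ((2 ^ (s - 1) : ℕ) : ℝ) := by
      have h4n : N ≤ 4 * 2 ^ (s - 1) := by omega
      exact_mod_cast h4n
    linarith
  have hmono : Tendsto Ns atTop atTop := by
    apply tendsto_atTop_mono (f := fun k : ℕ => k) _ tendsto_id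
    intro k
    have h1 : Nat.pair e₀ (k + 1) + 1 < 2 ^ (Nat.pair e₀ (k + 1) + 1) := Nat.lt_two_pow_self
    have h2 : k + 1 ≤ Nat.pair e₀ (k + 1) := Nat.right_le_pair e₀ (k + 1)
    show k ≤ 2 ^ (Nat.pair e₀ (k + 1) + 1) - 1
    omega
  have hlim : (1 : ℝ) ≤ 3 / 4 :=
    le_of_tendsto (hdens.comp hmono) (Eventually.of_forall hbound)
  norm_num at hlim
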